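/- Let F be a field of characteristic p, and let d ≥ 1 be an integer such that p does not divide d + 2 (no condition if p = 0). Define f : F^d × F → F by f(x, r) = r^{d+2} + Σ_{i=1}^{d} x_i·r^i. Then for every x ∈ F^d and every (Δx, Δr, Δt) ∈ F^d × F × F with (Δx, Δr, Δt) ≠ (0, 0, 0), the set { r ∈ F : f(x + Δx, r + Δr) = f(x, r) + Δt } has at most d + 1 elements. Consequently, if F is finite with |F| = Q and r is chosen uniformly at random from F, then the probability that the algebraically manipulated codeword (x + Δx, r + Δr, f(x,r) + Δt) satisfies the AMD verification equation f(x + Δx, r + Δr) = f(x,r) + Δt is at most (d+1)/Q. -/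

import Mathlib

open Finset Polynomial

noncomputable section

open scoped Classical

theorem amd_security (F : Type) [Field F] (d : ℕ) (hd : 1 ≤ d)
    (hchar : ∀ p : ℕ, CharP F p → ¬ p ∣ (d + 2))
    (f : (Fin d → F) → F → F)
    (hf : ∀ x r, f x r = r ^ (d + 2) + ∑ i : Fin d, x i * r ^ ((i : ℕ) + 1)) :
    ∀ (x Δx : Fin d → F) (Δr Δt : F), ¬(Δx = 0 ∧ Δr = 0 ∧ Δt = 0) →
      ({r : F | f (x + Δx) (r + Δr) = f x r + Δt}.Finite ∧
        {r : F | f (x + Δx) (r + Δr) = f x r + Δt}.ncard ≤ d + 1) ∧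
      ∀ (_ : Fintype F),
        ((Finset.univ.filter
            (fun r : F => f (x + Δx) (r + Δr) = f x r + Δt)).card : ℝ) /
            (Fintype.card F : ℝ)
          ≤ (d + 1 : ℝ) / (Fintype.card F : ℝ) := by
  intro x Δx Δr Δt hne
  have hd2 : ((d : F) + 2) ≠ 0 := by
    have := hchar (ringChar F) (ringChar.charP F)
    intro h
    apply this
    rw [← CharP.cast_eq_zero_iff F (ringChar F) (d + 2)]
    push_cast
    exact h
  set P : F[X] :=
    (X + C Δr) ^ (d + 2)
      + ∑ i : Fin d, C (x i + Δx i) * (X + C Δr) ^ ((i : ℕ) + 1)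
      - (X ^ (d + 2) + ∑ i : Fin d, C (x i) * X ^ ((i : ℕ) + 1))
      - C Δt with hPdef
  have heval : ∀ r : F, (f (x + Δx) (r + Δr) = f x r + Δt) ↔ P.IsRoot r := by
    intro r
    have : P.eval r = f (x + Δx) (r + Δr) - (f x r + Δt) := by
      simp only [hPdef, hf, Pi.add_apply, eval_sub, eval_add, eval_pow, eval_X, eval_C,
        eval_finset_sum, eval_mul]
      ring
    rw [IsRoot, this, sub_eq_zero]
  have hsum_deg : ∀ (c : Fin d → F) (a : F) (m : ℕ), d < m →
      (∑ i : Fin d, C (c i) * (X + C a) ^ ((i : ℕ) + 1)).coeff m = 0 := by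
    intro c a m hm
    rw [finset_sum_coeff]
    apply Finset.sum_eq_zero
    intro i _
    apply coeff_eq_zero_of_natDegree_lt
    calc (C (c i) * (X + C a) ^ ((i : ℕ) + 1)).natDegree
        ≤ (C (c i)).natDegree + ((X + C a) ^ ((i : ℕ) + 1)).natDegree := natDegree_mul_le
      _ ≤ 0 + ((i : ℕ) + 1) * 1 := by
          gcongr
          · simp
          · calc ((X + C a) ^ ((i : ℕ) + 1)).natDegree ≤ ((i:ℕ)+1) * (X + C a).natDegree :=
                natDegree_pow_le
            _ = ((i:ℕ)+1) * 1 := by rw [natDegree_X_add_C]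
      _ < m := by
          have := i.isLt
          omega
  have hsum_coeff : ∀ (c : Fin d → F) (j : Fin d),
      (∑ i : Fin d, C (c i) * X ^ ((i : ℕ) + 1)).coeff ((j : ℕ) + 1) = c j := by
    intro c j
    rw [finset_sum_coeff, Finset.sum_eq_single j]
    · simp [coeff_X_pow]
    · intro b _ hb
      have hbj : ¬ ((b : ℕ) + 1 = (j : ℕ) + 1) := fun he => hb (Fin.ext (by omega))
      have hbj2 : ¬ ((j : ℕ) + 1 = (b : ℕ) + 1) := fun he => hbj he.symm
      simp [coeff_C_mul, coeff_X_pow, hbj, hbj2]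
      exact fun h => absurd (Fin.ext h).symm hb
    · simp
  have hsum_deg' : ∀ (c : Fin d → F) (m : ℕ), d < m →
      (∑ i : Fin d, C (c i) * X ^ ((i : ℕ) + 1)).coeff m = 0 := by
    intro c m hm
    rw [finset_sum_coeff]
    apply Finset.sum_eq_zero
    intro i _
    have h1 : ¬ ((i : ℕ) + 1 = m) := by have := i.isLt; omega
    have h2 : ¬ (m = (i : ℕ) + 1) := fun he => h1 he.symm
    simp [coeff_C_mul, coeff_X_pow, h1, h2]
  have hdeg : P.natDegree ≤ d + 1 := by
    rw [natDegree_le_iff_coeff_eq_zero]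
    intro m hm
    have hm0 : ¬ (m = 0) := by omega
    simp only [hPdef, coeff_sub, coeff_add, coeff_X_add_C_pow,
      hsum_deg _ _ m (by omega), hsum_deg' _ m (by omega), coeff_C, if_neg hm0, coeff_X_pow]
    rcases eq_or_lt_of_le (show d + 2 ≤ m by omega) with h | h
    · rw [← h]
      simp
    · have h1 : ¬ (m = d + 2) := by omega
      have h2 : (d + 2).choose m = 0 := Nat.choose_eq_zero_of_lt h
      simp [h1, h2]
  have hP0 : P ≠ 0 := by
    by_cases hΔr : Δr = 0
    · rcases not_and_or.mp hne with hΔx | h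
      · obtain ⟨j, hj⟩ : ∃ j, Δx j ≠ 0 := by
          by_contra h'
          push_neg at h'
          exact hΔx (funext h')
        intro h0
        apply hj
        have hc : P.coeff ((j : ℕ) + 1) = Δx j := by
          subst hΔr
          have h1 : ¬ ((j:ℕ) + 1 = d + 2) := by have := j.isLt; omega
          have h2 : ¬ ((j:ℕ) + 1 = 0) := by omega
          simp only [hPdef, C_0, add_zero, coeff_sub, coeff_add, hsum_coeff,
            coeff_X_pow, coeff_C, if_neg h1, if_neg h2]
          ring
        rw [h0, coeff_zero] at hc
        exact hc.symm
      · have hΔt : Δt ≠ 0 := by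
          rcases not_and_or.mp h with h' | h'
          · exact absurd hΔr h'
          · exact h'
        intro h0
        apply hΔt
        have hc : P.coeff 0 = -Δt := by
          subst hΔr
          have h1 : ¬ ((0:ℕ) = d + 2) := by omega
          simp only [hPdef, C_0, add_zero, coeff_sub, coeff_add, finset_sum_coeff,
            coeff_C_mul, coeff_X_pow, coeff_C, if_neg h1, if_pos rfl]
          simp
        rw [h0, coeff_zero] at hc
        simpa using hc.symm
    · intro h0
      have hc : P.coeff (d + 1) = Δr * ((d : F) + 2) := by
        have h1 : ¬ (d + 1 = d + 2) := by omega
        have h2 : ¬ (d + 1 = 0) := by omega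
        have h3 : d + 2 - (d + 1) = 1 := by omega
        have h4 : (d + 2).choose (d + 1) = d + 2 := by
          rw [show d + 2 = (d + 1) + 1 from rfl, Nat.choose_succ_self_right]
        simp only [hPdef, coeff_sub, coeff_add, coeff_X_add_C_pow,
          hsum_deg _ Δr (d+1) (by omega), hsum_deg' _ (d+1) (by omega), coeff_C,
          if_neg h1, if_neg h2, coeff_X_pow, h3, h4, pow_one]
        push_cast
        ring
      rw [h0, coeff_zero] at hc
      rcases mul_eq_zero.mp hc.symm with h | h
      · exact hΔr h
      · exact hd2 h
  have hsetroot : {r : F | f (x + Δx) (r + Δr) = f x r + Δt} = {r : F | P.IsRoot r} := by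
    ext r; exact heval r
  have hfin : {r : F | f (x + Δx) (r + Δr) = f x r + Δt}.Finite := by
    rw [hsetroot]; exact P.finite_setOf_isRoot hP0
  have hcard : {r : F | f (x + Δx) (r + Δr) = f x r + Δt}.ncard ≤ d + 1 := by
    rw [hsetroot]
    have h1 : {r : F | P.IsRoot r} = ↑P.roots.toFinset := by
      ext r; simp [Polynomial.mem_roots, hP0]
    rw [h1, Set.ncard_coe_finset]
    calc P.roots.toFinset.card ≤ Multiset.card P.roots := Multiset.toFinset_card_le _
      _ ≤ P.natDegree := P.card_roots'
      _ ≤ d + 1 := hdeg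
  refine ⟨⟨hfin, hcard⟩, ?_⟩
  intro hFt
  have hkey : ((Finset.univ.filter
      (fun r : F => f (x + Δx) (r + Δr) = f x r + Δt)).card : ℝ) ≤ (d + 1 : ℝ) := by
    have heq : (Finset.univ.filter
        (fun r : F => f (x + Δx) (r + Δr) = f x r + Δt)).card
        = {r : F | f (x + Δx) (r + Δr) = f x r + Δt}.ncard := by
      rw [← Set.ncard_coe_finset]
      congr 1
      ext r
      simp
    rw [heq]
    exact_mod_cast hcard
  have hQ : (0 : ℝ) ≤ (Fintype.card F : ℝ) := by positivity
  exact div_le_div_of_nonneg_right hkey hQ
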